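/- arXiv:2602.16096 — 11 statements merged into one kernel-verified Lean document; each statement's English description precedes it below -/
import Mathlib

section
/- Let (a_n)_{n≥0} be a sequence of real numbers and let q be a real number. For every natural number n, the Bernoulli transform satisfies S_n(q) = Σ_{j=0}^{n} (-1)^j C(n,j) M(n,j) q^j, where M(n,j) = Σ_{l=0}^{j} (-1)^l C(j,l) a_{n-l} (note that n - l ≥ 0 since l ≤ j ≤ n). -/
open Finset

theorem bernoulli_transform_basis (a : ℕ → ℝ) (q : ℝ) (n : ℕ) :
    ∑ k ∈ range (n + 1), a k * (n.choose k : ℝ) * (1 - q) ^ k * q ^ (n - k) =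
      ∑ j ∈ range (n + 1), (-1 : ℝ) ^ j * (n.choose j : ℝ) *
        (∑ l ∈ range (j + 1), (-1 : ℝ) ^ l * (j.choose l : ℝ) * a (n - l)) * q ^ j := by
  have hrhs : ∑ j ∈ range (n + 1), (-1 : ℝ) ^ j * (n.choose j : ℝ) *
      (∑ l ∈ range (j + 1), (-1 : ℝ) ^ l * (j.choose l : ℝ) * a (n - l)) * q ^ j =
      ∑ l ∈ range (n + 1), ∑ j ∈ Finset.Ico l (n + 1),
        (-1 : ℝ) ^ j * (n.choose j : ℝ) * ((-1 : ℝ) ^ l * (j.choose l : ℝ) * a (n - l)) * q ^ j := by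
    simp only [Finset.mul_sum, Finset.sum_mul]
    simp only [range_eq_Ico]
    rw [← Finset.sum_Ico_Ico_comm 0 (n + 1)
      (fun l j => (-1 : ℝ) ^ j * (n.choose j : ℝ) * ((-1 : ℝ) ^ l * (j.choose l : ℝ) * a (n - l)) * q ^ j)]
  rw [hrhs, ← Finset.sum_range_reflect]
  refine Finset.sum_congr rfl fun l hl => ?_
  rw [Finset.mem_range] at hl
  simp only [Nat.add_sub_cancel]
  have hln : l ≤ n := Nat.lt_succ_iff.mp hl
  rw [Nat.choose_symm hln, Nat.sub_sub_self hln]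
  have hpow : (1 - q) ^ (n - l) = ∑ t ∈ range (n - l + 1), (-q) ^ t * 1 ^ (n - l - t) * ((n - l).choose t : ℝ) := by
    rw [← add_pow]; ring_nf
  rw [hpow, Finset.sum_Ico_eq_sum_range]
  have hrange : n + 1 - l = n - l + 1 := by omega
  rw [hrange]
  simp only [Finset.mul_sum, Finset.sum_mul]
  refine Finset.sum_congr rfl fun t ht => ?_
  rw [Finset.mem_range] at ht
  have htn : l + t ≤ n := by omega
  have hchoose : (n.choose (l + t) : ℝ) * ((l + t).choose l : ℝ) = (n.choose l : ℝ) * ((n - l).choose t : ℝ) := by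
    rw [← Nat.cast_mul, ← Nat.cast_mul, Nat.choose_mul (Nat.le_add_right l t)]
    simp
  have h1 : ((-1 : ℝ)) ^ (l + t) * (-1 : ℝ) ^ l = (-1 : ℝ) ^ t := by
    rw [pow_add, mul_right_comm, ← pow_add, Even.neg_one_pow ⟨l, rfl⟩, one_mul]
  calc a (n - l) * (n.choose l : ℝ) * ((-q) ^ t * 1 ^ (n - l - t) * ((n - l).choose t : ℝ)) * q ^ l
      = ((-1 : ℝ) ^ t) * ((n.choose l : ℝ) * ((n - l).choose t : ℝ)) * a (n - l) * q ^ (l + t) := by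
        rw [neg_pow q t, pow_add]; ring
    _ = (-1 : ℝ) ^ (l + t) * (n.choose (l + t) : ℝ) * ((-1 : ℝ) ^ l * ((l + t).choose l : ℝ) * a (n - l)) * q ^ (l + t) := by
        rw [← hchoose, ← h1]; ring
end

section
/- Let F_n denote the Fibonacci numbers (F_0 = 0, F_1 = 1, F_{n+2} = F_{n+1} + F_n). For all natural numbers n and r with r ≥ n, and every real number q, Σ_{k=0}^{n} F_{k+r} C(n,k) (1-q)^k q^{n-k} = Σ_{j=0}^{n} (-1)^j C(n,j) F_{n+r-2j} q^j (note that n + r - 2j ≥ 0 for 0 ≤ j ≤ n since r ≥ n). -/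
open Finset

lemma fib_aux (n r : ℕ) (hrn : r ≥ n) (q x : ℝ) (hx : x ≠ 0) (hx2 : x ^ 2 = x + 1) :
    ∑ k ∈ range (n + 1), x ^ (k + r) * (n.choose k : ℝ) * (1 - q) ^ k * q ^ (n - k) =
      ∑ j ∈ range (n + 1), (-1 : ℝ) ^ j * (n.choose j : ℝ) * x ^ (n + r - 2 * j) * q ^ j := by
  have key : x * (1 - q) + q = (1 + (-q) * x⁻¹ * x⁻¹) * x := by
    field_simp
    linear_combination (-q) * hx2
  calc ∑ k ∈ range (n + 1), x ^ (k + r) * (n.choose k : ℝ) * (1 - q) ^ k * q ^ (n - k)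
      = ∑ k ∈ range (n + 1), (x * (1 - q)) ^ k * q ^ (n - k) * (n.choose k : ℝ) * x ^ r := by
        refine sum_congr rfl fun k _ => ?_
        rw [pow_add, mul_pow]; ring
    _ = (x * (1 - q) + q) ^ n * x ^ r := by
        rw [← sum_mul, ← add_pow]
    _ = ((1 + (-q) * x⁻¹ * x⁻¹) * x) ^ n * x ^ r := by rw [key]
    _ = (1 + (-q) * x⁻¹ * x⁻¹) ^ n * x ^ (n + r) := by rw [mul_pow, pow_add]; ring
    _ = (((-q) * x⁻¹ * x⁻¹) + 1) ^ n * x ^ (n + r) := by ring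
    _ = (∑ j ∈ range (n + 1), ((-q) * x⁻¹ * x⁻¹) ^ j * (1:ℝ) ^ (n - j) * (n.choose j : ℝ)) *
          x ^ (n + r) := by rw [add_pow]
    _ = ∑ j ∈ range (n + 1), (-1 : ℝ) ^ j * (n.choose j : ℝ) * x ^ (n + r - 2 * j) * q ^ j := by
        rw [sum_mul]
        refine sum_congr rfl fun j hj => ?_
        have hj' : j ≤ n := Nat.lt_succ_iff.mp (mem_range.mp hj)
        have h2j : 2 * j ≤ n + r := by omega
        rw [pow_sub₀ x hx h2j, show 2 * j = j + j from by ring, pow_add]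
        ring

theorem fibonacci_bernoulli_transform (n r : ℕ) (hrn : r ≥ n) (q : ℝ) :
    ∑ k ∈ range (n + 1), (Nat.fib (k + r) : ℝ) * (n.choose k : ℝ) * (1 - q) ^ k * q ^ (n - k) =
      ∑ j ∈ range (n + 1), (-1 : ℝ) ^ j * (n.choose j : ℝ) * (Nat.fib (n + r - 2 * j) : ℝ) * q ^ j := by
  have hφ := fib_aux n r hrn q Real.goldenRatio Real.goldenRatio_ne_zero Real.goldenRatio_sq
  have hψ := fib_aux n r hrn q Real.goldenConj Real.goldenConj_ne_zero Real.goldenConj_sq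
  calc ∑ k ∈ range (n + 1), (Nat.fib (k + r) : ℝ) * (n.choose k : ℝ) * (1 - q) ^ k * q ^ (n - k)
      = (∑ k ∈ range (n + 1), Real.goldenRatio ^ (k + r) * (n.choose k : ℝ) * (1 - q) ^ k * q ^ (n - k)
          - ∑ k ∈ range (n + 1), Real.goldenConj ^ (k + r) * (n.choose k : ℝ) * (1 - q) ^ k * q ^ (n - k))
          / Real.sqrt 5 := by
        rw [← sum_sub_distrib, sum_div]
        refine sum_congr rfl fun k _ => ?_
        rw [Real.coe_fib_eq]; ring
    _ = (∑ j ∈ range (n + 1), (-1 : ℝ) ^ j * (n.choose j : ℝ) * Real.goldenRatio ^ (n + r - 2 * j) * q ^ j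
          - ∑ j ∈ range (n + 1), (-1 : ℝ) ^ j * (n.choose j : ℝ) * Real.goldenConj ^ (n + r - 2 * j) * q ^ j)
          / Real.sqrt 5 := by rw [hφ, hψ]
    _ = ∑ j ∈ range (n + 1), (-1 : ℝ) ^ j * (n.choose j : ℝ) * (Nat.fib (n + r - 2 * j) : ℝ) * q ^ j := by
        rw [← sum_sub_distrib, sum_div]
        refine sum_congr rfl fun j _ => ?_
        rw [Real.coe_fib_eq]; ring
end

section
/- Let L_n denote the Lucas numbers (L_0 = 2, L_1 = 1, L_{n+2} = L_{n+1} + L_n). For all natural numbers n and r with r ≥ n, and every real number q, Σ_{k=0}^{n} L_{k+r} C(n,k) (1-q)^k q^{n-k} = Σ_{j=0}^{n} (-1)^j C(n,j) L_{n+r-2j} q^j (note that n + r - 2j ≥ 0 for 0 ≤ j ≤ n since r ≥ n). -/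
open Finset

lemma lucas_key (α : ℝ) (hα : α ^ 2 = α + 1) (n r : ℕ) (hrn : r ≥ n) (q : ℝ) :
    ∑ k ∈ range (n + 1), α ^ (k + r) * (n.choose k : ℝ) * (1 - q) ^ k * q ^ (n - k) =
      ∑ j ∈ range (n + 1), (-1 : ℝ) ^ j * (n.choose j : ℝ) * α ^ (n + r - 2 * j) * q ^ j := by
  have hne : α ≠ 0 := by
    intro h; rw [h] at hα; norm_num at hα
  have h1 : ∑ k ∈ range (n + 1), α ^ (k + r) * (n.choose k : ℝ) * (1 - q) ^ k * q ^ (n - k)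
      = α ^ r * (((1 - q) * α) + q) ^ n := by
    rw [add_pow, mul_sum]
    apply sum_congr rfl
    intro k _
    rw [pow_add, mul_pow]
    ring
  have h2 : ((1 - q) * α + q) = (α ^ 2 - q) / α := by
    rw [eq_div_iff hne]
    linear_combination (-q) * hα
  have h3 : α ^ r = α ^ (r - n) * α ^ n := by
    rw [← pow_add]; congr 1; omega
  rw [h1, h2, div_pow, h3]
  have hmm : α ^ (r - n) * α ^ n * ((α ^ 2 - q) ^ n / α ^ n)
      = α ^ (r - n) * ((-q) + α ^ 2) ^ n := by
    field_simp; ring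
  rw [hmm, add_pow, mul_sum, eq_comm]
  apply sum_congr rfl
  intro j hj
  have hjn : j ≤ n := by simpa using Nat.lt_succ_iff.mp (mem_range.mp hj)
  have he : α ^ (n + r - 2 * j) = α ^ (r - n) * (α ^ 2) ^ (n - j) := by
    rw [← pow_mul, ← pow_add]; congr 1; omega
  rw [he, neg_pow]
  ring

theorem lucas_bernoulli_transform (L : ℕ → ℕ)
    (hL0 : L 0 = 2) (hL1 : L 1 = 1) (hLrec : ∀ m : ℕ, L (m + 2) = L (m + 1) + L m)
    (n r : ℕ) (hrn : r ≥ n) (q : ℝ) :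
    ∑ k ∈ range (n + 1), (L (k + r) : ℝ) * (n.choose k : ℝ) * (1 - q) ^ k * q ^ (n - k) =
      ∑ j ∈ range (n + 1), (-1 : ℝ) ^ j * (n.choose j : ℝ) * (L (n + r - 2 * j) : ℝ) * q ^ j := by
  set φ : ℝ := (1 + Real.sqrt 5) / 2 with hφdef
  set ψ : ℝ := (1 - Real.sqrt 5) / 2 with hψdef
  have h5 : Real.sqrt 5 ^ 2 = 5 := Real.sq_sqrt (by norm_num)
  have hφ : φ ^ 2 = φ + 1 := by rw [hφdef]; nlinarith [h5]
  have hψ : ψ ^ 2 = ψ + 1 := by rw [hψdef]; nlinarith [h5]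
  have hsum : φ + ψ = 1 := by rw [hφdef, hψdef]; ring
  clear_value φ ψ
  clear hφdef hψdef h5
  have hLm : ∀ m, (L m : ℝ) = φ ^ m + ψ ^ m := by
    intro m
    induction m using Nat.twoStepInduction with
    | zero => simp [hL0]; norm_num
    | one => simp [hL1]; linarith [hsum]
    | more m ih1 ih2 =>
      rw [hLrec]; push_cast; rw [ih1, ih2]
      linear_combination (-(φ ^ m)) * hφ + (-(ψ ^ m)) * hψ
  calc ∑ k ∈ range (n + 1), (L (k + r) : ℝ) * (n.choose k : ℝ) * (1 - q) ^ k * q ^ (n - k)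
      = (∑ k ∈ range (n + 1), φ ^ (k + r) * (n.choose k : ℝ) * (1 - q) ^ k * q ^ (n - k))
        + ∑ k ∈ range (n + 1), ψ ^ (k + r) * (n.choose k : ℝ) * (1 - q) ^ k * q ^ (n - k) := by
        rw [← sum_add_distrib]
        apply sum_congr rfl
        intro k _
        rw [hLm]; ring
    _ = (∑ j ∈ range (n + 1), (-1 : ℝ) ^ j * (n.choose j : ℝ) * φ ^ (n + r - 2 * j) * q ^ j)
        + ∑ j ∈ range (n + 1), (-1 : ℝ) ^ j * (n.choose j : ℝ) * ψ ^ (n + r - 2 * j) * q ^ j := by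
        rw [lucas_key φ hφ n r hrn q, lucas_key ψ hψ n r hrn q]
    _ = ∑ j ∈ range (n + 1), (-1 : ℝ) ^ j * (n.choose j : ℝ) * (L (n + r - 2 * j) : ℝ) * q ^ j := by
        rw [← sum_add_distrib]
        apply sum_congr rfl
        intro j _
        rw [hLm]; ring
end

section
/- Let α, x, q be real numbers and n, r natural numbers. Then Σ_{k=0}^{n} L^{(α)}_{k+r}(x) C(n,k) (1-q)^k q^{n-k} = Σ_{j=0}^{n} (-1)^j C(n,j) L^{(α-j)}_{n+r}(x) q^j, where L^{(β)}_m denotes the generalized Laguerre polynomial of degree m and parameter β. -/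
open Finset

/-- Generalized binomial coefficient `t(t-1)⋯(t-s+1)/s!` of a real `t`. -/
noncomputable def rchoose (t : ℝ) (s : ℕ) : ℝ :=
  (∏ i ∈ range s, (t - (i : ℝ))) / (s.factorial : ℝ)

/-- Generalized Laguerre polynomial `L^{(β)}_m(x)`. -/
noncomputable def genLaguerre (β : ℝ) (m : ℕ) (x : ℝ) : ℝ :=
  ∑ i ∈ range (m + 1), ((-1 : ℝ) ^ i / (i.factorial : ℝ)) * rchoose ((m : ℝ) + β) (m - i) * x ^ i

/-- Pascal's rule for the generalized binomial coefficient. -/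
lemma rchoose_pascal (t : ℝ) (s : ℕ) :
    rchoose (t + 1) (s + 1) = rchoose t s + rchoose t (s + 1) := by
  have hfac : (s.factorial : ℝ) ≠ 0 := by positivity
  have hfac1 : ((s+1).factorial : ℝ) ≠ 0 := by positivity
  unfold rchoose
  have h1 : ∏ i ∈ range (s + 1), (t + 1 - (i : ℝ)) = (∏ i ∈ range s, (t - (i : ℝ))) * (t + 1) := by
    rw [prod_range_succ']
    have e : ∀ i ∈ range s, (t + 1 - ((i + 1 : ℕ) : ℝ)) = t - (i : ℝ) := by
      intro i _; push_cast; ring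
    rw [prod_congr rfl e]
    norm_num
  have h2 : ∏ i ∈ range (s + 1), (t - (i : ℝ)) = (∏ i ∈ range s, (t - (i : ℝ))) * (t - s) := by
    rw [prod_range_succ]
  have h3 : ((s+1).factorial : ℝ) = (s + 1 : ℝ) * (s.factorial : ℝ) := by
    rw [Nat.factorial_succ]; push_cast; ring
  rw [h1, h2, h3]
  have hs1 : (s + 1 : ℝ) ≠ 0 := by positivity
  field_simp
  ring

/-- Lowering the parameter: `L^{(β-1)}_{m+1} = L^{(β)}_{m+1} - L^{(β)}_m`. -/
lemma genLaguerre_step (β : ℝ) (m : ℕ) (x : ℝ) :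
    genLaguerre (β - 1) (m + 1) x = genLaguerre β (m + 1) x - genLaguerre β m x := by
  unfold genLaguerre
  have key : ∀ i ∈ range (m + 1),
      ((-1 : ℝ) ^ i / (i.factorial : ℝ)) * rchoose (((m + 1 : ℕ) : ℝ) + (β - 1)) (m + 1 - i) * x ^ i
        = ((-1 : ℝ) ^ i / (i.factorial : ℝ)) * rchoose (((m + 1 : ℕ) : ℝ) + β) (m + 1 - i) * x ^ i
          - ((-1 : ℝ) ^ i / (i.factorial : ℝ)) * rchoose ((m : ℝ) + β) (m - i) * x ^ i := by
    intro i hi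
    have hi' : i ≤ m := Nat.lt_succ_iff.mp (mem_range.mp hi)
    have h1 : m + 1 - i = (m - i) + 1 := by omega
    have h2 : ((m + 1 : ℕ) : ℝ) + β = ((m : ℝ) + β) + 1 := by push_cast; ring
    have h3 : ((m + 1 : ℕ) : ℝ) + (β - 1) = (m : ℝ) + β := by push_cast; ring
    rw [h1, h2, h3, rchoose_pascal]
    ring
  have htop :
      ((-1 : ℝ) ^ (m + 1) / ((m + 1).factorial : ℝ)) * rchoose (((m + 1 : ℕ) : ℝ) + (β - 1)) (m + 1 - (m + 1)) * x ^ (m + 1)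
        = ((-1 : ℝ) ^ (m + 1) / ((m + 1).factorial : ℝ)) * rchoose (((m + 1 : ℕ) : ℝ) + β) (m + 1 - (m + 1)) * x ^ (m + 1) := by
    simp [rchoose]
  rw [sum_range_succ, sum_range_succ (n := m + 1), htop, sum_congr rfl key, sum_sub_distrib]
  ring

theorem laguerre_bernoulli_transform (α x q : ℝ) (n r : ℕ) :
    ∑ k ∈ range (n + 1), genLaguerre α (k + r) x * (n.choose k : ℝ) * (1 - q) ^ k * q ^ (n - k) =
      ∑ j ∈ range (n + 1),
        (-1 : ℝ) ^ j * (n.choose j : ℝ) * genLaguerre (α - (j : ℝ)) (n + r) x * q ^ j := by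
  induction n generalizing α r with
  | zero => simp
  | succ n ih =>
    set A : ℕ → ℝ := fun r' =>
      ∑ k ∈ range (n + 1), genLaguerre α (k + r') x * (n.choose k : ℝ) * (1 - q) ^ k * q ^ (n - k) with hA
    set R : ℝ → ℕ → ℝ := fun β r' =>
      ∑ j ∈ range (n + 1), (-1 : ℝ) ^ j * (n.choose j : ℝ) * genLaguerre (β - (j : ℝ)) (n + r') x * q ^ j with hRdef
    have ih1 : A r = R α r := ih α r
    have ih2 : A (r + 1) = R α (r + 1) := ih α (r + 1)
    -- left side split
    have hL : (∑ k ∈ range (n + 1 + 1), genLaguerre α (k + r) x * ((n+1).choose k : ℝ) * (1 - q) ^ k * q ^ (n + 1 - k))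
        = q * A r + (1 - q) * A (r + 1) := by
      have h3 : q * A r = ∑ k ∈ range (n + 2),
          genLaguerre α (k + r) x * (n.choose k : ℝ) * (1 - q) ^ k * q ^ (n + 1 - k) := by
        rw [sum_range_succ]
        simp only [Nat.choose_succ_self, Nat.cast_zero, mul_zero, zero_mul, add_zero]
        rw [hA, Finset.mul_sum]
        apply sum_congr rfl
        intro k hk
        have hk' : k ≤ n := Nat.lt_succ_iff.mp (mem_range.mp hk)
        rw [show n + 1 - k = (n - k) + 1 from by omega, pow_succ]
        ring
      have h4 : (∑ k ∈ range (n + 1 + 1), genLaguerre α (k + r) x * ((n+1).choose k : ℝ) * (1 - q) ^ k * q ^ (n + 1 - k)) - q * A r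
          = (1 - q) * A (r + 1) := by
        rw [h3, ← sum_sub_distrib, sum_range_succ']
        have h0 : genLaguerre α (0 + r) x * (((n+1).choose 0 : ℕ) : ℝ) * (1 - q) ^ 0 * q ^ (n + 1 - 0)
            - genLaguerre α (0 + r) x * ((n.choose 0 : ℕ) : ℝ) * (1 - q) ^ 0 * q ^ (n + 1 - 0) = 0 := by
          simp
        rw [h0, add_zero, hA, Finset.mul_sum]
        apply sum_congr rfl
        intro k hk
        rw [show k + 1 + r = k + (r + 1) from by omega,
            show n + 1 - (k + 1) = n - k from by omega]
        have hc : (((n+1).choose (k+1) : ℕ) : ℝ) = (n.choose k : ℝ) + (n.choose (k+1) : ℝ) := by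
          rw [Nat.choose_succ_succ]; push_cast; ring
        rw [hc]
        ring
      linarith [h4]
    -- right side split
    have hR : (∑ j ∈ range (n + 1 + 1),
          (-1 : ℝ) ^ j * ((n+1).choose j : ℝ) * genLaguerre (α - (j : ℝ)) (n + 1 + r) x * q ^ j)
        = R α (r + 1) - q * R (α - 1) (r + 1) := by
      have h1 : R α (r + 1) = ∑ j ∈ range (n + 2),
          (-1 : ℝ) ^ j * (n.choose j : ℝ) * genLaguerre (α - (j : ℝ)) (n + (r + 1)) x * q ^ j := by
        rw [sum_range_succ]
        simp [hRdef]
      have h2 : (∑ j ∈ range (n + 1 + 1),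
            (-1 : ℝ) ^ j * ((n+1).choose j : ℝ) * genLaguerre (α - (j : ℝ)) (n + 1 + r) x * q ^ j)
          - R α (r + 1) = - (q * R (α - 1) (r + 1)) := by
        rw [h1, ← sum_sub_distrib, sum_range_succ']
        have h0 : ((-1 : ℝ) ^ 0 * ((n+1).choose 0 : ℝ) * genLaguerre (α - ((0:ℕ) : ℝ)) (n + 1 + r) x * q ^ 0
            - (-1 : ℝ) ^ 0 * (n.choose 0 : ℝ) * genLaguerre (α - ((0:ℕ) : ℝ)) (n + (r + 1)) x * q ^ 0) = 0 := by
          rw [show n + 1 + r = n + (r + 1) from by omega]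
          simp
        rw [h0, add_zero]
        have hexp : -(q * R (α - 1) (r + 1)) = ∑ j ∈ range (n + 1),
            -(q * ((-1 : ℝ) ^ j * (n.choose j : ℝ) * genLaguerre ((α - 1) - (j : ℝ)) (n + (r + 1)) x * q ^ j)) := by
          rw [hRdef, Finset.mul_sum, ← Finset.sum_neg_distrib]
        rw [hexp]
        apply sum_congr rfl
        intro j hj
        rw [show n + 1 + r = n + (r + 1) from by omega]
        have hc : (((n+1).choose (j+1) : ℕ) : ℝ) = (n.choose j : ℝ) + (n.choose (j+1) : ℝ) := by
          rw [Nat.choose_succ_succ]; push_cast; ring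
        have he : α - (((j + 1 : ℕ)) : ℝ) = (α - 1) - (j : ℝ) := by push_cast; ring
        rw [hc, he]
        ring
      linarith [h2]
    -- the Laguerre step identity summed up
    have hRdiff : R α (r + 1) - R (α - 1) (r + 1) = R α r := by
      rw [hRdef, ← sum_sub_distrib]
      apply sum_congr rfl
      intro j hj
      have hs := genLaguerre_step (α - (j : ℝ)) (n + r) x
      have he : (α - 1) - (j : ℝ) = (α - (j : ℝ)) - 1 := by ring
      rw [show n + (r + 1) = (n + r) + 1 from by omega, he, hs]
      ring
    rw [hL, hR]
    linear_combination q * ih1 + (1 - q) * ih2 - q * hRdiff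
end

section
/- Let (B_n(x))_{n≥0} be the single-variable Bell polynomials, determined by B_0(x) = 1 and B_{n+1}(x) = x · Σ_{k=0}^{n} C(n,k) B_k(x). For all real numbers x, q and every natural number n, x · Σ_{k=0}^{n} (-1)^k B_k(x) C(n,k) (1-q)^{n-k} q^{k} = Σ_{j=0}^{n} (-1)^j C(n,j) B_{j+1}(x) q^j. -/
open Finset

theorem bell_bernoulli_transform (B : ℕ → ℝ → ℝ)
    (hB0 : ∀ x : ℝ, B 0 x = 1)
    (hBrec : ∀ (n : ℕ) (x : ℝ), B (n + 1) x = x * ∑ k ∈ range (n + 1), (n.choose k : ℝ) * B k x)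
    (x q : ℝ) (n : ℕ) :
    x * ∑ k ∈ range (n + 1), (-1 : ℝ) ^ k * B k x * (n.choose k : ℝ) * (1 - q) ^ (n - k) * q ^ k =
      ∑ j ∈ range (n + 1), (-1 : ℝ) ^ j * (n.choose j : ℝ) * B (j + 1) x * q ^ j := by
  have hrhs : ∀ j ∈ range (n + 1),
      (-1 : ℝ) ^ j * (n.choose j : ℝ) * B (j + 1) x * q ^ j =
        x * ∑ k ∈ range (n + 1), (if k ≤ j then
          (-1 : ℝ) ^ j * (n.choose j : ℝ) * (j.choose k : ℝ) * B k x * q ^ j else 0) := by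
    intro j hj
    have hsub : (∑ k ∈ range (n + 1), (if k ≤ j then
        (-1 : ℝ) ^ j * (n.choose j : ℝ) * (j.choose k : ℝ) * B k x * q ^ j else 0)) =
        ∑ k ∈ range (j + 1),
          (-1 : ℝ) ^ j * (n.choose j : ℝ) * (j.choose k : ℝ) * B k x * q ^ j := by
      rw [← Finset.sum_subset (Finset.range_subset_range.2 (Nat.succ_le_succ (Nat.lt_succ_iff.mp
        (Finset.mem_range.mp hj))))]
      · apply Finset.sum_congr rfl
        intro k hk
        simp [Nat.lt_succ_iff.mp (Finset.mem_range.mp hk)]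
      · intro k _ hk
        have : ¬ k ≤ j := fun h => hk (Finset.mem_range.2 (Nat.lt_succ_of_le h))
        simp [this]
    rw [hsub, hBrec]
    simp only [Finset.mul_sum, Finset.sum_mul]
    apply Finset.sum_congr rfl
    intros
    ring
  rw [Finset.sum_congr rfl hrhs, ← Finset.mul_sum, Finset.sum_comm]
  congr 1
  apply Finset.sum_congr rfl
  intro k hk
  have hkn : k ≤ n := Nat.lt_succ_iff.mp (Finset.mem_range.mp hk)
  have step1 : (∑ j ∈ range (n + 1), if k ≤ j then
      (-1 : ℝ) ^ j * (n.choose j : ℝ) * (j.choose k : ℝ) * B k x * q ^ j else 0)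
      = ∑ j ∈ Ico k (n + 1),
        (-1 : ℝ) ^ j * (n.choose j : ℝ) * (j.choose k : ℝ) * B k x * q ^ j := by
    rw [← Finset.sum_filter]
    congr 1
    ext j
    simp only [Finset.mem_filter, Finset.mem_range, Finset.mem_Ico]
    omega
  rw [step1, Finset.sum_Ico_eq_sum_range]
  have hchoose : ∀ m, m ≤ n - k →
      ((n.choose (k + m) : ℝ) * ((k + m).choose k : ℝ))
        = (n.choose k : ℝ) * ((n - k).choose m : ℝ) := by
    intro m hm
    have h1 : k + m ≤ n := by omega
    have h2 : k ≤ k + m := Nat.le_add_right _ _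
    have := Nat.choose_mul (n := n) h2
    rw [Nat.add_sub_cancel_left] at this
    exact_mod_cast congrArg (Nat.cast : ℕ → ℝ) this
  have hr : n + 1 - k = (n - k) + 1 := by omega
  rw [hr]
  have hbin : (1 - q) ^ (n - k) = ∑ m ∈ range ((n - k) + 1),
      (-q) ^ m * 1 ^ (n - k - m) * ((n - k).choose m : ℝ) := by
    rw [← add_pow]
    ring_nf
  rw [hbin]
  simp only [Finset.mul_sum, Finset.sum_mul]
  apply Finset.sum_congr rfl
  intro m hm
  have hmle : m ≤ n - k := Nat.lt_succ_iff.mp (Finset.mem_range.mp hm)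
  have hc := hchoose m hmle
  rw [pow_add, pow_add, one_pow, neg_pow]
  linear_combination (-(-1 : ℝ) ^ k * (-1 : ℝ) ^ m * B k x * q ^ k * q ^ m) * hc
end

section
/- Let (w_n(x))_{n≥0} be the geometric polynomials, determined by w_0(x) = 1 and w_n(x) = x · Σ_{k=0}^{n-1} C(n,k) w_k(x) for n ≥ 1. For all real numbers x, q and every natural number n, x · Σ_{k=0}^{n} (-1)^k w_k(x) C(n,k) (1-q)^{n-k} q^{k} = (x+1) · Σ_{j=0}^{n} C(n,j) w_j(x) (-q)^j - 1. -/
open Finset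

lemma geom_poly_key (w : ℕ → ℝ → ℝ)
    (hw0 : ∀ x : ℝ, w 0 x = 1)
    (hwrec : ∀ (n : ℕ), 1 ≤ n → ∀ (x : ℝ),
      w n x = x * ∑ k ∈ range n, (n.choose k : ℝ) * w k x)
    (x : ℝ) (j : ℕ) :
    x * ∑ k ∈ range (j + 1), (j.choose k : ℝ) * w k x
      = (x + 1) * w j x - (if j = 0 then 1 else 0) := by
  cases j with
  | zero => simp [hw0]
  | succ m =>
    rw [Finset.sum_range_succ, mul_add, ← hwrec (m + 1) (Nat.succ_le_succ (Nat.zero_le m)) x]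
    simp
    ring

theorem geometric_poly_bernoulli_transform (w : ℕ → ℝ → ℝ)
    (hw0 : ∀ x : ℝ, w 0 x = 1)
    (hwrec : ∀ (n : ℕ), 1 ≤ n → ∀ (x : ℝ),
      w n x = x * ∑ k ∈ range n, (n.choose k : ℝ) * w k x)
    (x q : ℝ) (n : ℕ) :
    x * ∑ k ∈ range (n + 1), (-1 : ℝ) ^ k * w k x * (n.choose k : ℝ) * (1 - q) ^ (n - k) * q ^ k =
      (x + 1) * (∑ j ∈ range (n + 1), (n.choose j : ℝ) * w j x * (-q) ^ j) - 1 := by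
  have step : ∀ k ∈ range (n + 1),
      (-1 : ℝ) ^ k * w k x * (n.choose k : ℝ) * (1 - q) ^ (n - k) * q ^ k
        = ∑ j ∈ range (n + 1), (n.choose j : ℝ) * ((j.choose k : ℝ) * w k x) * (-q) ^ j := by
    intro k hk
    rw [Finset.mem_range, Nat.lt_succ_iff] at hk
    have h1 : (1 - q) ^ (n - k) = ∑ m ∈ range (n - k + 1),
        (-q) ^ m * 1 ^ (n - k - m) * ((n - k).choose m : ℝ) := by
      rw [← add_pow]; ring_nf
    rw [h1, Finset.mul_sum, Finset.sum_mul]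
    have h2 : ∀ m ∈ range (n - k + 1),
        (-1 : ℝ) ^ k * w k x * (n.choose k : ℝ) *
            ((-q) ^ m * 1 ^ (n - k - m) * ((n - k).choose m : ℝ)) * q ^ k
          = (n.choose (k + m) : ℝ) * (((k + m).choose k : ℝ) * w k x) * (-q) ^ (k + m) := by
      intro m hm
      rw [Finset.mem_range, Nat.lt_succ_iff] at hm
      have hkm : k + m ≤ n := by omega
      have := Nat.choose_mul (n := n) (k := k + m) (s := k) (Nat.le_add_right k m)
      rw [Nat.add_sub_cancel_left] at this
      have hc : (n.choose (k + m) : ℝ) * ((k + m).choose k : ℝ)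
          = (n.choose k : ℝ) * ((n - k).choose m : ℝ) := by
        exact_mod_cast congrArg (Nat.cast : ℕ → ℝ) this
      have hq : (-q : ℝ) ^ (k + m) = (-1) ^ k * q ^ k * (-q) ^ m := by
        rw [pow_add, neg_pow]
      calc (-1 : ℝ) ^ k * w k x * (n.choose k : ℝ) *
            ((-q) ^ m * 1 ^ (n - k - m) * ((n - k).choose m : ℝ)) * q ^ k
          = ((n.choose k : ℝ) * ((n - k).choose m : ℝ)) * w k x *
            ((-1) ^ k * q ^ k * (-q) ^ m) := by ring
        _ = (n.choose (k + m) : ℝ) * (((k + m).choose k : ℝ) * w k x) * (-q) ^ (k + m) := by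
            rw [← hc, hq]; ring
    rw [Finset.sum_congr rfl h2]
    -- reindex: sum over m in range (n-k+1) of f (k+m) = sum over j in Ico k (n+1)
    have h3 : ∑ m ∈ range (n - k + 1), (fun j => (n.choose j : ℝ) *
          ((j.choose k : ℝ) * w k x) * (-q) ^ j) (k + m)
        = ∑ j ∈ Ico k (n + 1), (n.choose j : ℝ) * ((j.choose k : ℝ) * w k x) * (-q) ^ j := by
      rw [Finset.sum_Ico_eq_sum_range]
      have : n + 1 - k = n - k + 1 := by omega
      rw [this]
    rw [h3]
    apply Finset.sum_subset
    · intro j hj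
      rw [Finset.mem_Ico] at hj
      exact Finset.mem_range.mpr hj.2
    · intro j hj hj2
      rw [Finset.mem_range] at hj
      rw [Finset.mem_Ico] at hj2
      have : j < k := by omega
      rw [Nat.choose_eq_zero_of_lt this]
      simp
  rw [Finset.sum_congr rfl step, Finset.sum_comm, Finset.mul_sum]
  have step2 : ∀ j ∈ range (n + 1),
      x * ∑ k ∈ range (n + 1), (n.choose j : ℝ) * ((j.choose k : ℝ) * w k x) * (-q) ^ j
        = (n.choose j : ℝ) * ((x + 1) * w j x - (if j = 0 then 1 else 0)) * (-q) ^ j := by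
    intro j hj
    rw [Finset.mem_range, Nat.lt_succ_iff] at hj
    have htr : ∑ k ∈ range (n + 1), (j.choose k : ℝ) * w k x
        = ∑ k ∈ range (j + 1), (j.choose k : ℝ) * w k x := by
      symm
      apply Finset.sum_subset (Finset.range_subset_range.mpr (by omega))
      intro k _ hk
      rw [Finset.mem_range, Nat.lt_succ_iff, not_le] at hk
      rw [Nat.choose_eq_zero_of_lt hk]
      simp
    have hfac : ∑ k ∈ range (n + 1), (n.choose j : ℝ) * ((j.choose k : ℝ) * w k x) * (-q) ^ j
        = (n.choose j : ℝ) * (-q) ^ j * ∑ k ∈ range (n + 1), (j.choose k : ℝ) * w k x := by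
      rw [Finset.mul_sum]
      exact Finset.sum_congr rfl fun k _ => by ring
    rw [hfac, htr]
    have := geom_poly_key w hw0 hwrec x j
    calc x * ((n.choose j : ℝ) * (-q) ^ j * ∑ k ∈ range (j + 1), (j.choose k : ℝ) * w k x)
        = (n.choose j : ℝ) * (-q) ^ j
            * (x * ∑ k ∈ range (j + 1), (j.choose k : ℝ) * w k x) := by ring
      _ = (n.choose j : ℝ) * ((x + 1) * w j x - (if j = 0 then 1 else 0)) * (-q) ^ j := by
          rw [this]; ring
  rw [Finset.sum_congr rfl step2]
  have hsplit : ∀ j ∈ range (n + 1),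
      (n.choose j : ℝ) * ((x + 1) * w j x - (if j = 0 then 1 else 0)) * (-q) ^ j
        = (x + 1) * ((n.choose j : ℝ) * w j x * (-q) ^ j)
            - (if j = 0 then (1 : ℝ) else 0) := by
    intro j _
    by_cases hj : j = 0
    · subst hj; simp
    · simp only [hj, if_false]; ring
  rw [Finset.sum_congr rfl hsplit, Finset.sum_sub_distrib, ← Finset.mul_sum]
  congr 1
  rw [Finset.sum_ite_eq' (range (n + 1)) 0 (fun _ => (1 : ℝ))]
  simp
end

section
/- Let (a_n)_{n≥0} be a sequence of real numbers, let A be the formal power series over ℝ whose n-th coefficient is a_n, and let q be a real number. Then the formal power series (1 - q·z)^{-1} · A((1-q)·z·(1-q·z)^{-1}) — where the inverse (1-q·z)^{-1} exists since 1-q·z has constant coefficient 1, and A is substituted with the power series (1-q)·z·(1-q·z)^{-1}, which has zero constant coefficient — has n-th coefficient equal to the Bernoulli transform S_n(q) = Σ_{k=0}^{n} a_k C(n,k) (1-q)^k q^{n-k} for every natural number n. -/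
open Finset PowerSeries

/-- Composition `A ∘ B` of formal power series (the usual substitution, valid when `B` has
zero constant coefficient: the `n`-th coefficient of `∑ k, (coeff k A) • B ^ k` is then the
finite sum `∑_{k ≤ n} (coeff k A) * coeff n (B ^ k)`). -/
noncomputable def psComp (A B : PowerSeries ℝ) : PowerSeries ℝ :=
  PowerSeries.mk fun n =>
    ∑ k ∈ range (n + 1), PowerSeries.coeff (R := ℝ) k A * PowerSeries.coeff (R := ℝ) n (B ^ k)

private lemma inv_geom (q : ℝ) :
    (1 - PowerSeries.C (R := ℝ) q * X)⁻¹ = PowerSeries.mk fun m => q ^ m := by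
  rw [PowerSeries.inv_eq_iff_mul_eq_one (by simp)]
  ext n
  rw [mul_sub, mul_one, mul_comm (PowerSeries.C (R := ℝ) q) X, ← mul_assoc, map_sub,
    PowerSeries.coeff_mul_C, PowerSeries.coeff_one]
  cases n with
  | zero => simp
  | succ m => simp [PowerSeries.coeff_succ_mul_X, pow_succ]

private lemma hockey (n k : ℕ) :
    ∑ i ∈ range (n + 1), (i + k).choose k = (n + k + 1).choose (k + 1) := by
  exact Nat.sum_range_add_choose n k

private lemma geom_pow (q : ℝ) (k : ℕ) :
    (PowerSeries.mk fun m => q ^ m : PowerSeries ℝ) ^ (k + 1) =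
      PowerSeries.mk fun m => ((m + k).choose k : ℝ) * q ^ m := by
  induction k with
  | zero => simp
  | succ k ih =>
    ext n
    rw [pow_succ, ih, PowerSeries.coeff_mk, PowerSeries.coeff_mul]
    rw [Finset.Nat.sum_antidiagonal_eq_sum_range_succ
      (fun i j => PowerSeries.coeff (R := ℝ) i (PowerSeries.mk fun m => ((m + k).choose k : ℝ) * q ^ m)
        * PowerSeries.coeff (R := ℝ) j (PowerSeries.mk fun m => q ^ m))]
    simp only [PowerSeries.coeff_mk]
    have step : ∀ i ∈ range (n + 1),
        ((i + k).choose k : ℝ) * q ^ i * q ^ (n - i) = ((i + k).choose k : ℝ) * q ^ n := by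
      intro i hi
      rw [mul_assoc, ← pow_add]
      congr 2
      exact Nat.add_sub_cancel' (Nat.lt_succ_iff.mp (mem_range.mp hi))
    rw [Finset.sum_congr rfl step, ← Finset.sum_mul]
    have : (∑ i ∈ range (n + 1), ((i + k).choose k : ℝ)) = ((n + k + 1).choose (k + 1) : ℝ) := by
      rw [← hockey n k]; push_cast; ring
    rw [this]
    norm_cast

private lemma coeff_u_mul_B_pow (q : ℝ) (n k : ℕ) :
    PowerSeries.coeff (R := ℝ) n ((1 - PowerSeries.C (R := ℝ) q * X)⁻¹ *
      (PowerSeries.C (R := ℝ) (1 - q) * X * (1 - PowerSeries.C (R := ℝ) q * X)⁻¹) ^ k) =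
    if k ≤ n then (n.choose k : ℝ) * (1 - q) ^ k * q ^ (n - k) else 0 := by
  rw [inv_geom, mul_pow, mul_pow]
  have h : (PowerSeries.mk fun m => q ^ m : PowerSeries ℝ) *
      ((PowerSeries.C (R := ℝ) (1 - q)) ^ k * X ^ k * (PowerSeries.mk fun m => q ^ m) ^ k)
      = (PowerSeries.C (R := ℝ) ((1 - q) ^ k)) *
        (X ^ k * (PowerSeries.mk fun m => q ^ m) ^ (k + 1)) := by
    rw [map_pow]; ring
  rw [h, PowerSeries.coeff_C_mul, geom_pow, PowerSeries.coeff_X_pow_mul']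
  split_ifs with hkn
  · rw [PowerSeries.coeff_mk, Nat.sub_add_cancel hkn]; ring
  · ring

theorem bernoulli_transform_gen_function (a : ℕ → ℝ) (q : ℝ) (n : ℕ) :
    PowerSeries.coeff (R := ℝ) n
        ((1 - PowerSeries.C (R := ℝ) q * PowerSeries.X)⁻¹ *
          psComp (PowerSeries.mk a)
            (PowerSeries.C (R := ℝ) (1 - q) * PowerSeries.X *
              (1 - PowerSeries.C (R := ℝ) q * PowerSeries.X)⁻¹)) =
      ∑ k ∈ range (n + 1), a k * (n.choose k : ℝ) * (1 - q) ^ k * q ^ (n - k) := by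
  set u : PowerSeries ℝ := (1 - PowerSeries.C (R := ℝ) q * X)⁻¹ with hu
  set B : PowerSeries ℝ := PowerSeries.C (R := ℝ) (1 - q) * X * u with hB
  have hB0 : ∀ j k : ℕ, j < k → PowerSeries.coeff (R := ℝ) j (B ^ k) = 0 := by
    intro j k h
    have : B ^ k = ((PowerSeries.C (R := ℝ) (1 - q)) ^ k * u ^ k) * X ^ k := by rw [hB]; ring
    rw [this, PowerSeries.coeff_mul_X_pow', if_neg (by omega)]
  rw [psComp, PowerSeries.coeff_mul]
  have h1 : ∀ p ∈ antidiagonal n,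
      PowerSeries.coeff (R := ℝ) p.1 u * PowerSeries.coeff (R := ℝ) p.2 (PowerSeries.mk fun m =>
        ∑ k ∈ range (m + 1), PowerSeries.coeff (R := ℝ) k (PowerSeries.mk a)
          * PowerSeries.coeff (R := ℝ) m (B ^ k))
      = ∑ k ∈ range (n + 1),
          a k * (PowerSeries.coeff (R := ℝ) p.1 u * PowerSeries.coeff (R := ℝ) p.2 (B ^ k)) := by
    intro p hp
    have hp2 : p.2 ≤ n := by have := Finset.HasAntidiagonal.mem_antidiagonal.mp hp; omega
    have hext : (∑ k ∈ range (p.2 + 1), PowerSeries.coeff (R := ℝ) p.1 u *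
          (PowerSeries.coeff (R := ℝ) k (PowerSeries.mk a) * PowerSeries.coeff (R := ℝ) p.2 (B ^ k)))
        = ∑ k ∈ range (n + 1), PowerSeries.coeff (R := ℝ) p.1 u *
          (PowerSeries.coeff (R := ℝ) k (PowerSeries.mk a) * PowerSeries.coeff (R := ℝ) p.2 (B ^ k)) :=
      Finset.sum_subset (Finset.range_subset_range.mpr (by omega)) (fun k _ hk => by
        have hlt : p.2 < k := by simpa using hk
        rw [hB0 p.2 k hlt, mul_zero, mul_zero])
    rw [PowerSeries.coeff_mk, Finset.mul_sum, hext]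
    exact Finset.sum_congr rfl fun k _ => by rw [PowerSeries.coeff_mk]; ring
  rw [Finset.sum_congr rfl h1, Finset.sum_comm]
  refine Finset.sum_congr rfl fun k hk => ?_
  rw [← Finset.mul_sum, ← PowerSeries.coeff_mul, hu, hB, coeff_u_mul_B_pow,
    if_pos (Nat.lt_succ_iff.mp (mem_range.mp hk))]
  ring
end

section
/- Let (a_n)_{n≥0} be a sequence of real numbers and for a real number t set S_n(t) := Σ_{k=0}^{n} a_k C(n,k) (1-t)^k t^{n-k}. Then for all real numbers x, q and every natural number n, S_n(x + q - x·q) = Σ_{k=0}^{n} S_k(x) C(n,k) (1-q)^k q^{n-k}; that is, the Bernoulli transform (with parameter q) of the sequence (S_n(x)) is the sequence (S_n(x+q-xq)). -/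
open Finset

theorem bernoulli_transform_semigroup (a : ℕ → ℝ) (S : ℕ → ℝ → ℝ)
    (hS : ∀ (m : ℕ) (t : ℝ),
      S m t = ∑ k ∈ range (m + 1), a k * (m.choose k : ℝ) * (1 - t) ^ k * t ^ (m - k))
    (x q : ℝ) (n : ℕ) :
    S n (x + q - x * q) =
      ∑ k ∈ range (n + 1), S k x * (n.choose k : ℝ) * (1 - q) ^ k * q ^ (n - k) := by
  -- common middle expression
  have hmid :
      S n (x + q - x * q) =
        ∑ j ∈ range (n + 1), ∑ m ∈ range (n - j + 1),
          a j * (n.choose j : ℝ) * ((1 - x) * (1 - q)) ^ j *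
            (((n - j).choose m : ℝ) * (x * (1 - q)) ^ m * q ^ (n - j - m)) := by
    rw [hS]
    refine Finset.sum_congr rfl fun j hj => ?_
    have h1 : (1 : ℝ) - (x + q - x * q) = (1 - x) * (1 - q) := by ring
    have h2 : x + q - x * q = x * (1 - q) + q := by ring
    rw [h1, h2, add_pow, Finset.mul_sum]
    refine Finset.sum_congr rfl fun m hm => ?_
    ring
  rw [hmid]
  -- now handle the RHS
  have hrhs :
      (∑ k ∈ range (n + 1), S k x * (n.choose k : ℝ) * (1 - q) ^ k * q ^ (n - k)) =
        ∑ j ∈ range (n + 1), ∑ k ∈ Ico j (n + 1),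
          a j * (k.choose j : ℝ) * (1 - x) ^ j * x ^ (k - j) *
            ((n.choose k : ℝ) * (1 - q) ^ k * q ^ (n - k)) := by
    simp only [Finset.range_eq_Ico]
    rw [Finset.sum_Ico_Ico_comm]
    refine Finset.sum_congr rfl fun k hk => ?_
    rw [hS k x]
    rw [Finset.range_eq_Ico, Finset.sum_mul, Finset.sum_mul, Finset.sum_mul]
    exact Finset.sum_congr rfl fun j hj => by ring
  rw [hrhs]
  refine Finset.sum_congr rfl fun j hj => ?_
  have hjn : j ≤ n := by simpa [Nat.lt_succ_iff] using hj
  rw [Finset.sum_Ico_eq_sum_range]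
  have hlen : n + 1 - j = n - j + 1 := by omega
  rw [hlen]
  refine Finset.sum_congr rfl fun m hm => ?_
  have hmle : m ≤ n - j := by simpa [Nat.lt_succ_iff] using hm
  have hkn : j + m ≤ n := by omega
  have hchoose : ((n.choose (j + m) : ℕ) : ℝ) * ((j + m).choose j : ℝ) =
      (n.choose j : ℝ) * ((n - j).choose m : ℝ) := by
    have := Nat.choose_mul (n := n) (Nat.le_add_right j m)
    have h' : (j + m) - j = m := by omega
    rw [h'] at this
    exact_mod_cast congrArg (Nat.cast (R := ℝ)) this
  have e1 : j + m - j = m := by omega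
  have e2 : n - (j + m) = n - j - m := by omega
  rw [e1, e2, pow_add, mul_pow, mul_pow]
  linear_combination (-(a j * (1 - x) ^ j * x ^ m * (1 - q) ^ j * (1 - q) ^ m * q ^ (n - j - m))) * hchoose
end

section
/- Let (a_n)_{n≥0} be a sequence of real numbers and for a real number t set S_n(t) := Σ_{k=0}^{n} a_k C(n,k) (1-t)^k t^{n-k}. Then for all real numbers x, q and all natural numbers m, n, (1-q)^m · Σ_{k=0}^{n} S_{k+m}(x) C(n,k) (1-q)^k q^{n-k} = Σ_{j=0}^{m} C(m,j) (-q)^{m-j} S_{j+n}(x + q - x·q). -/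
open Finset

private lemma bt_base (a : ℕ → ℝ) (S : ℕ → ℝ → ℝ)
    (hS : ∀ (m : ℕ) (t : ℝ),
      S m t = ∑ k ∈ range (m + 1), a k * (m.choose k : ℝ) * (1 - t) ^ k * t ^ (m - k))
    (x q : ℝ) (n : ℕ) :
    ∑ k ∈ range (n + 1), S k x * (n.choose k : ℝ) * (1 - q) ^ k * q ^ (n - k) =
      S n (x + q - x * q) := by
  simp only [hS]
  rw [Finset.sum_congr rfl (fun k _ => by rw [Finset.sum_mul, Finset.sum_mul, Finset.sum_mul])]
  rw [Finset.sum_congr rfl (fun k hk => Finset.sum_subset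
      (Finset.range_subset_range.2 (Nat.succ_le_succ (Nat.lt_succ_iff.1 (Finset.mem_range.1 hk))))
      (fun i _ hi => by
        rw [Nat.choose_eq_zero_of_lt (by simpa using hi)]
        push_cast; ring))]
  rw [Finset.sum_comm]
  refine Finset.sum_congr rfl fun i hi => ?_
  have hin : i ≤ n := Nat.lt_succ_iff.1 (Finset.mem_range.1 hi)
  have h1 : ∑ k ∈ range (n + 1),
      a i * (k.choose i : ℝ) * (1 - x) ^ i * x ^ (k - i) * ((n.choose k : ℝ)) * (1 - q) ^ k * q ^ (n - k)
      = ∑ k ∈ Finset.Ico i (n + 1),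
      a i * (k.choose i : ℝ) * (1 - x) ^ i * x ^ (k - i) * ((n.choose k : ℝ)) * (1 - q) ^ k * q ^ (n - k) := by
    refine (Finset.sum_subset (by intro k hk; simp at hk ⊢; omega) fun k hk hk' => ?_).symm
    have : k < i := by simp at hk hk'; omega
    rw [Nat.choose_eq_zero_of_lt this]
    push_cast; ring
  rw [h1, Finset.sum_Ico_eq_sum_range]
  have h2 : n + 1 - i = (n - i) + 1 := by omega
  rw [h2]
  have h3 : ∀ j ∈ range (n - i + 1),
      a i * (((i + j).choose i : ℝ)) * (1 - x) ^ i * x ^ (i + j - i) * ((n.choose (i + j) : ℝ)) *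
        (1 - q) ^ (i + j) * q ^ (n - (i + j))
      = (a i * (1 - x) ^ i * (1 - q) ^ i * (n.choose i : ℝ)) *
        ((x * (1 - q)) ^ j * q ^ ((n - i) - j) * (((n - i).choose j : ℝ))) := by
    intro j hj
    have hjn : j ≤ n - i := Nat.lt_succ_iff.1 (Finset.mem_range.1 hj)
    have hij : i + j ≤ n := by omega
    have hc : (n.choose (i + j) : ℝ) * ((i + j).choose i : ℝ) = (n.choose i : ℝ) * ((n - i).choose j : ℝ) := by
      rw [← Nat.cast_mul, ← Nat.cast_mul, Nat.choose_mul (Nat.le_add_right i j),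
        Nat.add_sub_cancel_left]
    have he1 : i + j - i = j := by omega
    have he2 : n - (i + j) = (n - i) - j := by omega
    rw [he1, he2, mul_pow, pow_add]
    calc a i * (((i + j).choose i : ℝ)) * (1 - x) ^ i * x ^ j * ((n.choose (i + j) : ℝ)) *
          ((1 - q) ^ i * (1 - q) ^ j) * q ^ ((n - i) - j)
        = ((n.choose (i + j) : ℝ) * ((i + j).choose i : ℝ)) *
          (a i * (1 - x) ^ i * x ^ j * (1 - q) ^ i * (1 - q) ^ j * q ^ ((n - i) - j)) := by ring
      _ = ((n.choose i : ℝ) * ((n - i).choose j : ℝ)) *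
          (a i * (1 - x) ^ i * x ^ j * (1 - q) ^ i * (1 - q) ^ j * q ^ ((n - i) - j)) := by rw [hc]
      _ = _ := by ring
  rw [Finset.sum_congr rfl h3, ← Finset.mul_sum, ← add_pow]
  have hu1 : x * (1 - q) + q = x + q - x * q := by ring
  have hu2 : (1 - x) ^ i * (1 - q) ^ i = (1 - (x + q - x * q)) ^ i := by
    rw [← mul_pow]; ring_nf
  rw [hu1]
  calc a i * (1 - x) ^ i * (1 - q) ^ i * (n.choose i : ℝ) * (x + q - x * q) ^ (n - i)
      = a i * ((1 - x) ^ i * (1 - q) ^ i) * (n.choose i : ℝ) * (x + q - x * q) ^ (n - i) := by ring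
    _ = a i * (1 - (x + q - x * q)) ^ i * (n.choose i : ℝ) * (x + q - x * q) ^ (n - i) := by rw [hu2]
    _ = _ := by ring

private lemma bt_F_key (S : ℕ → ℝ → ℝ) (x q : ℝ) (m n : ℕ) :
    ∑ k ∈ range (n + 1 + 1), S (k + m) x * ((n + 1).choose k : ℝ) * (1 - q) ^ k * q ^ (n + 1 - k)
      = (1 - q) *
          ∑ k ∈ range (n + 1), S (k + (m + 1)) x * (n.choose k : ℝ) * (1 - q) ^ k * q ^ (n - k)
        + q * ∑ k ∈ range (n + 1), S (k + m) x * (n.choose k : ℝ) * (1 - q) ^ k * q ^ (n - k) := by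
  rw [Finset.sum_range_succ'
    (fun k => S (k + m) x * ((n + 1).choose k : ℝ) * (1 - q) ^ k * q ^ (n + 1 - k))]
  have h1 : ∀ k ∈ range (n + 1),
      S (k + 1 + m) x * (((n + 1).choose (k + 1) : ℝ)) * (1 - q) ^ (k + 1) * q ^ (n + 1 - (k + 1))
      = (1 - q) * (S (k + (m + 1)) x * ((n.choose k : ℝ)) * (1 - q) ^ k * q ^ (n - k))
        + S (k + 1 + m) x * ((n.choose (k + 1) : ℝ)) * (1 - q) ^ (k + 1) * q ^ (n - k) := by
    intro k _
    have hc : ((n + 1).choose (k + 1) : ℝ) = (n.choose k : ℝ) + (n.choose (k + 1) : ℝ) := by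
      rw [← Nat.cast_add, Nat.choose_succ_succ]
    rw [hc, show n + 1 - (k + 1) = n - k by omega, show k + 1 + m = k + (m + 1) by omega]
    ring
  rw [Finset.sum_congr rfl h1, Finset.sum_add_distrib, ← Finset.mul_sum]
  have h2 : q * ∑ k ∈ range (n + 1), S (k + m) x * (n.choose k : ℝ) * (1 - q) ^ k * q ^ (n - k)
      = ∑ k ∈ range (n + 1), S (k + m) x * (n.choose k : ℝ) * (1 - q) ^ k * q ^ ((n - k) + 1) := by
    rw [Finset.mul_sum]
    exact Finset.sum_congr rfl fun k _ => by rw [pow_succ]; ring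
  rw [h2]
  rw [Finset.sum_range_succ'
    (fun k => S (k + m) x * (n.choose k : ℝ) * (1 - q) ^ k * q ^ ((n - k) + 1))]
  rw [Finset.sum_range_succ
    (fun k => S (k + 1 + m) x * ((n.choose (k + 1) : ℝ)) * (1 - q) ^ (k + 1) * q ^ (n - k))]
  have h3 : ∀ k ∈ range n,
      S (k + 1 + m) x * ((n.choose (k + 1) : ℝ)) * (1 - q) ^ (k + 1) * q ^ (n - k)
      = S (k + 1 + m) x * ((n.choose (k + 1) : ℝ)) * (1 - q) ^ (k + 1) * q ^ ((n - (k + 1)) + 1) := by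
    intro k hk
    have : k < n := Finset.mem_range.1 hk
    rw [show (n - (k + 1)) + 1 = n - k by omega]
  rw [Finset.sum_congr rfl h3]
  simp [Nat.choose_eq_zero_of_lt (Nat.lt_succ_self n)]
  ring

private lemma bt_G_key (S : ℕ → ℝ → ℝ) (u q : ℝ) (m n : ℕ) :
    ∑ j ∈ range (m + 1 + 1), ((m + 1).choose j : ℝ) * (-q) ^ (m + 1 - j) * S (j + n) u
      = ∑ j ∈ range (m + 1), (m.choose j : ℝ) * (-q) ^ (m - j) * S (j + (n + 1)) u
        - q * ∑ j ∈ range (m + 1), (m.choose j : ℝ) * (-q) ^ (m - j) * S (j + n) u := by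
  rw [Finset.sum_range_succ'
    (fun j => ((m + 1).choose j : ℝ) * (-q) ^ (m + 1 - j) * S (j + n) u)]
  have h1 : ∀ j ∈ range (m + 1),
      (((m + 1).choose (j + 1) : ℝ)) * (-q) ^ (m + 1 - (j + 1)) * S (j + 1 + n) u
      = (m.choose j : ℝ) * (-q) ^ (m - j) * S (j + (n + 1)) u
        + (m.choose (j + 1) : ℝ) * (-q) ^ (m - j) * S (j + 1 + n) u := by
    intro j _
    have hc : ((m + 1).choose (j + 1) : ℝ) = (m.choose j : ℝ) + (m.choose (j + 1) : ℝ) := by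
      rw [← Nat.cast_add, Nat.choose_succ_succ]
    rw [hc, show m + 1 - (j + 1) = m - j by omega, show j + (n + 1) = j + 1 + n by omega]
    ring
  rw [Finset.sum_congr rfl h1, Finset.sum_add_distrib]
  have h2 : q * ∑ j ∈ range (m + 1), (m.choose j : ℝ) * (-q) ^ (m - j) * S (j + n) u
      = - ∑ j ∈ range (m + 1), (m.choose j : ℝ) * (-q) ^ ((m - j) + 1) * S (j + n) u := by
    rw [Finset.mul_sum, ← Finset.sum_neg_distrib]
    exact Finset.sum_congr rfl fun j _ => by rw [pow_succ]; ring
  rw [h2]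
  rw [Finset.sum_range_succ'
    (fun j => (m.choose j : ℝ) * (-q) ^ ((m - j) + 1) * S (j + n) u)]
  rw [Finset.sum_range_succ
    (fun j => (m.choose (j + 1) : ℝ) * (-q) ^ (m - j) * S (j + 1 + n) u)]
  have h3 : ∀ j ∈ range m,
      (m.choose (j + 1) : ℝ) * (-q) ^ (m - j) * S (j + 1 + n) u
      = (m.choose (j + 1) : ℝ) * (-q) ^ ((m - (j + 1)) + 1) * S (j + 1 + n) u := by
    intro j hj
    have : j < m := Finset.mem_range.1 hj
    rw [show (m - (j + 1)) + 1 = m - j by omega]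
  rw [Finset.sum_congr rfl h3]
  simp [Nat.choose_eq_zero_of_lt (Nat.lt_succ_self m)]
  ring

theorem bernoulli_transform_shifted (a : ℕ → ℝ) (S : ℕ → ℝ → ℝ)
    (hS : ∀ (m : ℕ) (t : ℝ),
      S m t = ∑ k ∈ range (m + 1), a k * (m.choose k : ℝ) * (1 - t) ^ k * t ^ (m - k))
    (x q : ℝ) (m n : ℕ) :
    (1 - q) ^ m *
        ∑ k ∈ range (n + 1), S (k + m) x * (n.choose k : ℝ) * (1 - q) ^ k * q ^ (n - k) =
      ∑ j ∈ range (m + 1), (m.choose j : ℝ) * (-q) ^ (m - j) * S (j + n) (x + q - x * q) := by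
  induction m generalizing n with
  | zero =>
    simpa using bt_base a S hS x q n
  | succ m ih =>
    have hF := bt_F_key S x q m n
    have hG := bt_G_key S (x + q - x * q) q m n
    have h1 : (1 - q) ^ (m + 1) *
        ∑ k ∈ range (n + 1), S (k + (m + 1)) x * (n.choose k : ℝ) * (1 - q) ^ k * q ^ (n - k)
        = (1 - q) ^ m *
            (∑ k ∈ range (n + 1 + 1),
              S (k + m) x * ((n + 1).choose k : ℝ) * (1 - q) ^ k * q ^ (n + 1 - k))
          - q * ((1 - q) ^ m *
            ∑ k ∈ range (n + 1), S (k + m) x * (n.choose k : ℝ) * (1 - q) ^ k * q ^ (n - k)) := by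
      rw [hF]; ring
    rw [h1, ih (n + 1), ih n, hG]
end

section
/- For all real numbers x, y and all natural numbers n, k with k ≤ n, Σ_{j=k}^{n} C(j,k) (1-y)^k y^{j-k} · C(n,j) (1-x)^j x^{n-j} = C(n,k) · ((1-x)(1-y))^k · (1 - (1-x)(1-y))^{n-k}. (Probabilistically: if Z(n) is binomial with parameters (n, 1-x) and, independently, T(m) is binomial with parameters (m, 1-y), then the compound variable T(Z(n)) is binomial with parameters (n, (1-x)(1-y)).) -/
open Finset

theorem compound_binomial (x y : ℝ) (n k : ℕ) (hk : k ≤ n) :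
    ∑ j ∈ Icc k n,
        (j.choose k : ℝ) * (1 - y) ^ k * y ^ (j - k) * (n.choose j : ℝ) * (1 - x) ^ j * x ^ (n - j) =
      (n.choose k : ℝ) * ((1 - x) * (1 - y)) ^ k * (1 - (1 - x) * (1 - y)) ^ (n - k) := by
  have h1 : (1 : ℝ) - (1 - x) * (1 - y) = (1 - x) * y + x := by ring
  rw [h1, add_pow, ← Finset.Ico_add_one_right_eq_Icc, Finset.sum_Ico_eq_sum_range, Finset.mul_sum]
  have hnk : n + 1 - k = n - k + 1 := by omega
  rw [hnk]
  refine Finset.sum_congr rfl fun i hi => ?_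
  have hi' : i ≤ n - k := by simpa [Nat.lt_succ_iff] using hi
  have hki : k + i ≤ n := by omega
  have hc : n.choose (k + i) * (k + i).choose k = n.choose k * (n - k).choose i := by
    rw [Nat.choose_mul (Nat.le_add_right k i), Nat.add_sub_cancel_left]
  have hc' : ((n.choose (k + i) : ℝ)) * ((k + i).choose k : ℝ) = (n.choose k : ℝ) * ((n - k).choose i : ℝ) := by
    exact_mod_cast congrArg (Nat.cast : ℕ → ℝ) hc
  have e1 : k + i - k = i := Nat.add_sub_cancel_left k i
  have e2 : n - (k + i) = n - k - i := by omega
  rw [e1, e2, pow_add]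
  rw [mul_pow, mul_pow]
  linear_combination ((1-y)^k * y^i * (1-x)^k * (1-x)^i * x^(n-k-i)) * hc'
end

section
/- Let (a_n)_{n≥0} be a sequence of real numbers and set M(n,j) := Σ_{l=0}^{j} (-1)^l C(j,l) a_{n-l} for 0 ≤ j ≤ n. Let (f_n)_{n≥0} be a sequence of functions f_n : ℝ → ℝ satisfying the Appell binomial identity f_n(u+v) = Σ_{k=0}^{n} C(n,k) f_k(u) v^{n-k} for all real u, v and all n ≥ 0. Then for all real numbers x, y and every natural number n, Σ_{k=0}^{n} a_k C(n,k) f_k(y) x^{n-k} = Σ_{j=0}^{n} (-1)^j C(n,j) M(n,j) f_{n-j}(x+y) x^j. -/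
open Finset

private lemma real_alt_sum (m : ℕ) :
    ∑ i ∈ range (m + 1), (-1 : ℝ) ^ i * (m.choose i : ℝ)
      = if m = 0 then 1 else 0 := by
  have h := @Int.alternating_sum_range_choose m
  have h2 := congrArg (fun z : ℤ => (z : ℝ)) h
  push_cast at h2
  simpa using h2

private lemma tri_comm {M : Type*} [AddCommMonoid M] (N : ℕ) (F : ℕ → ℕ → M) :
    ∑ j ∈ range N, ∑ k ∈ range (N - j), F j k
      = ∑ k ∈ range N, ∑ j ∈ range (N - k), F j k := by
  rw [Finset.sum_sigma', Finset.sum_sigma']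
  refine sum_nbij' (fun x => ⟨x.2, x.1⟩) (fun x => ⟨x.2, x.1⟩) ?_ ?_ (fun _ _ => rfl)
    (fun _ _ => rfl) (fun _ _ => rfl) <;>
    simp only [mem_sigma, mem_range, Sigma.forall] <;> intros <;> omega

private lemma choose_swap {n j k : ℕ} (h : j + k ≤ n) :
    n.choose j * (n - j).choose k = n.choose k * (n - k).choose j := by
  have h1 := Nat.choose_mul (n := n) (Nat.le_add_right j k)
  have h2 := Nat.choose_mul (n := n) (Nat.le_add_left k j)
  have hsym : (j + k).choose j = (j + k).choose k := by
    have := Nat.choose_symm (Nat.le_add_left k j)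
    simpa using this
  simp only [Nat.add_sub_cancel_left, Nat.add_sub_cancel] at h1 h2
  rw [← h1, ← h2, hsym]

private lemma inv_lemma (b : ℕ → ℝ) (m : ℕ) :
    ∑ j ∈ range (m + 1), (-1 : ℝ) ^ j * (m.choose j : ℝ) *
      (∑ l ∈ range (j + 1), (-1 : ℝ) ^ l * (j.choose l : ℝ) * b l) = b m := by
  simp only [mul_sum]
  simp only [range_eq_Ico]
  rw [← sum_Ico_Ico_comm]
  have key : ∀ l ∈ Ico 0 (m + 1),
      ∑ j ∈ Ico l (m + 1), (-1 : ℝ) ^ j * (m.choose j : ℝ) *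
        ((-1 : ℝ) ^ l * (j.choose l : ℝ) * b l) = if l = m then b m else 0 := by
    intro l hl
    rw [mem_Ico] at hl
    have hlm : l ≤ m := by omega
    rw [sum_Ico_eq_sum_range]
    have step : ∀ i ∈ range (m + 1 - l),
        (-1 : ℝ) ^ (l + i) * (m.choose (l + i) : ℝ) *
          ((-1 : ℝ) ^ l * ((l + i).choose l : ℝ) * b l)
        = (m.choose l : ℝ) * b l * ((-1 : ℝ) ^ i * ((m - l).choose i : ℝ)) := by
      intro i hi
      rw [mem_range] at hi
      have h1 : l + i ≤ m := by omega
      have h2 : m.choose (l + i) * (l + i).choose l = m.choose l * (m - l).choose i := by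
        have := Nat.choose_mul (n := m) (Nat.le_add_right l i)
        simpa using this
      have h2' : (m.choose (l + i) : ℝ) * ((l + i).choose l : ℝ)
          = (m.choose l : ℝ) * ((m - l).choose i : ℝ) := by exact_mod_cast h2
      have hsq : (-1 : ℝ) ^ l * (-1 : ℝ) ^ l = 1 := by
        rw [← pow_add, ← two_mul, pow_mul]; norm_num
      calc (-1 : ℝ) ^ (l + i) * (m.choose (l + i) : ℝ) *
              ((-1 : ℝ) ^ l * ((l + i).choose l : ℝ) * b l)
          = ((-1 : ℝ) ^ l * (-1 : ℝ) ^ l) * ((-1 : ℝ) ^ i *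
              ((m.choose (l + i) : ℝ) * ((l + i).choose l : ℝ)) * b l) := by
            rw [pow_add]; ring
        _ = (m.choose l : ℝ) * b l * ((-1 : ℝ) ^ i * ((m - l).choose i : ℝ)) := by
            rw [hsq, h2']; ring
    rw [sum_congr rfl step, ← mul_sum]
    have hrange : m + 1 - l = (m - l) + 1 := by omega
    rw [hrange, real_alt_sum]
    rcases eq_or_ne l m with h | h
    · subst h; simp
    · have : m - l ≠ 0 := by omega
      simp [this, h]
  rw [sum_congr rfl key]
  simp [Finset.sum_ite_eq']

theorem appell_binomial_sum (a : ℕ → ℝ) (f : ℕ → ℝ → ℝ)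
    (hf : ∀ (n : ℕ) (u v : ℝ),
      f n (u + v) = ∑ k ∈ range (n + 1), (n.choose k : ℝ) * f k u * v ^ (n - k))
    (x y : ℝ) (n : ℕ) :
    ∑ k ∈ range (n + 1), a k * (n.choose k : ℝ) * f k y * x ^ (n - k) =
      ∑ j ∈ range (n + 1), (-1 : ℝ) ^ j * (n.choose j : ℝ) *
        (∑ l ∈ range (j + 1), (-1 : ℝ) ^ l * (j.choose l : ℝ) * a (n - l)) *
          f (n - j) (x + y) * x ^ j := by
  set M : ℕ → ℝ := fun j => ∑ l ∈ range (j + 1), (-1 : ℝ) ^ l * (j.choose l : ℝ) * a (n - l)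
    with hM
  have expand : ∀ j ∈ range (n + 1),
      (-1 : ℝ) ^ j * (n.choose j : ℝ) * M j * f (n - j) (x + y) * x ^ j
      = ∑ k ∈ range (n + 1 - j),
          (-1 : ℝ) ^ j * (n.choose j : ℝ) * M j *
            (((n - j).choose k : ℝ) * f k y) * x ^ (n - k) := by
    intro j hj
    rw [mem_range] at hj
    have hj' : j ≤ n := by omega
    rw [add_comm x y, hf (n - j) y x]
    have hr : (n - j) + 1 = n + 1 - j := by omega
    rw [hr, mul_sum, sum_mul]
    refine sum_congr rfl fun k hk => ?_
    rw [mem_range] at hk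
    have hx : x ^ (n - j - k) * x ^ j = x ^ (n - k) := by
      rw [← pow_add]
      congr 1
      omega
    calc (-1 : ℝ) ^ j * (n.choose j : ℝ) * M j *
            (((n - j).choose k : ℝ) * f k y * x ^ (n - j - k)) * x ^ j
        = (-1 : ℝ) ^ j * (n.choose j : ℝ) * M j *
            (((n - j).choose k : ℝ) * f k y) * (x ^ (n - j - k) * x ^ j) := by ring
      _ = _ := by rw [hx]
  rw [sum_congr rfl expand, tri_comm]
  refine (sum_congr rfl fun k hk => ?_).symm
  rw [mem_range] at hk
  have hk' : k ≤ n := by omega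
  have step : ∀ j ∈ range (n + 1 - k),
      (-1 : ℝ) ^ j * (n.choose j : ℝ) * M j * (((n - j).choose k : ℝ) * f k y) * x ^ (n - k)
      = ((n.choose k : ℝ) * (f k y * x ^ (n - k))) *
          ((-1 : ℝ) ^ j * (((n - k).choose j : ℝ)) * M j) := by
    intro j hj
    rw [mem_range] at hj
    have hjk : j + k ≤ n := by omega
    have hc : (n.choose j : ℝ) * ((n - j).choose k : ℝ)
        = (n.choose k : ℝ) * ((n - k).choose j : ℝ) := by exact_mod_cast choose_swap hjk
    calc (-1 : ℝ) ^ j * (n.choose j : ℝ) * M j * (((n - j).choose k : ℝ) * f k y) * x ^ (n - k)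
        = ((n.choose j : ℝ) * ((n - j).choose k : ℝ)) *
            ((-1 : ℝ) ^ j * M j * f k y * x ^ (n - k)) := by ring
      _ = ((n.choose k : ℝ) * ((n - k).choose j : ℝ)) *
            ((-1 : ℝ) ^ j * M j * f k y * x ^ (n - k)) := by rw [hc]
      _ = _ := by ring
  rw [sum_congr rfl step, ← mul_sum]
  have hr : n + 1 - k = (n - k) + 1 := by omega
  have hinv := inv_lemma (fun l => a (n - l)) (n - k)
  rw [hr]
  simp only [hM] at hinv ⊢
  rw [hinv]
  have : n - (n - k) = k := by omega
  rw [this]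
  ring
end
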